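/- arXiv:1202.0644 — 4 statements merged into one kernel-verified Lean document; each statement's English description precedes it below -/
import Mathlib

section
/- Let A be an n×k complex matrix (k ≤ n) with columns W₁,...,W_k, and for each i let H_i = span{W_j : j ≠ i}. Then the smallest singular value of A satisfies s_min(A) ≥ (1/√k) · min_{1≤i≤k} dist(W_i, H_i), where dist is the Euclidean distance from a vector to a subspace. -/
/-- Euclidean norm of a complex vector. -/
noncomputable def cEnorm {ι : Type*} [Fintype ι] (v : ι → ℂ) : ℝ :=
  Real.sqrt (∑ i, ‖v i‖ ^ 2)

/-- Smallest singular value of a (possibly rectangular) complex matrix: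
`min` over unit vectors `x` of `‖B x‖₂`. -/
noncomputable def smin {ι κ : Type*} [Fintype ι] [Fintype κ] (B : Matrix ι κ ℂ) : ℝ :=
  sInf {r | ∃ x : κ → ℂ, cEnorm x = 1 ∧ r = cEnorm (B.mulVec x)}

/-- Euclidean distance from a vector to a subspace. -/
noncomputable def distE {ι : Type*} [Fintype ι] (v : ι → ℂ)
    (H : Submodule ℂ (ι → ℂ)) : ℝ :=
  sInf {r | ∃ h ∈ H, r = cEnorm (v - h)}

lemma cEnorm_nonneg {ι : Type*} [Fintype ι] (v : ι → ℂ) : 0 ≤ cEnorm v :=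
  Real.sqrt_nonneg _

lemma cEnorm_smul {ι : Type*} [Fintype ι] (c : ℂ) (v : ι → ℂ) :
    cEnorm (c • v) = ‖c‖ * cEnorm v := by
  unfold cEnorm
  have : ∀ i, ‖(c • v) i‖ ^ 2 = ‖c‖ ^ 2 * ‖v i‖ ^ 2 := by
    intro i
    simp [Pi.smul_apply, norm_mul, mul_pow]
  rw [Finset.sum_congr rfl (fun i _ => this i), ← Finset.mul_sum,
    Real.sqrt_mul (sq_nonneg _), Real.sqrt_sq (norm_nonneg _)]

lemma distE_nonneg {ι : Type*} [Fintype ι] (v : ι → ℂ) (H : Submodule ℂ (ι → ℂ)) :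
    0 ≤ distE v H := by
  apply Real.sInf_nonneg
  rintro r ⟨h, _, rfl⟩
  exact cEnorm_nonneg _

lemma distE_le {ι : Type*} [Fintype ι] (v : ι → ℂ) (H : Submodule ℂ (ι → ℂ))
    (h : ι → ℂ) (hh : h ∈ H) : distE v H ≤ cEnorm (v - h) := by
  apply csInf_le
  · exact ⟨0, by rintro r ⟨g, _, rfl⟩; exact cEnorm_nonneg _⟩
  · exact ⟨h, hh, rfl⟩

/-- For an `n × k` complex matrix `A` (`k ≤ n`) with columns `W₁, …, W_k`, the
smallest singular value satisfies
`s_min(A) ≥ (1/√k) ⬝ min_i dist(W_i, span{W_j : j ≠ i})`. -/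
theorem smin_ge_inv_sqrt_mul_min_dist {n k : ℕ} (hk : 0 < k) (hkn : k ≤ n)
    (A : Matrix (Fin n) (Fin k) ℂ) :
    (1 / Real.sqrt k) *
        (⨅ i : Fin k, distE (fun r => A r i)
          (Submodule.span ℂ {w | ∃ j : Fin k, j ≠ i ∧ w = fun r => A r j}))
      ≤ smin A := by
  have : Nonempty (Fin k) := ⟨⟨0, hk⟩⟩
  apply le_csInf
  · refine ⟨cEnorm (A.mulVec (Pi.single ⟨0, hk⟩ 1)), Pi.single ⟨0, hk⟩ 1, ?_, rfl⟩
    simp [cEnorm, Pi.single_apply, apply_ite, Finset.sum_ite_eq']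
  rintro r ⟨x, hx, rfl⟩
  -- sum of squares is 1
  have hsum : ∑ j, ‖x j‖ ^ 2 = 1 := by
    have := hx
    unfold cEnorm at this
    nlinarith [Real.sq_sqrt (Finset.sum_nonneg (fun j _ => sq_nonneg ‖x j‖) :
      (0:ℝ) ≤ ∑ j, ‖x j‖ ^ 2), Real.sqrt_nonneg (∑ j, ‖x j‖ ^ 2)]
  -- find a big coordinate
  obtain ⟨i, _, hi⟩ : ∃ i ∈ Finset.univ, (1:ℝ)/k ≤ ‖x i‖ ^ 2 := by
    by_contra hcon
    push_neg at hcon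
    have : ∑ j, ‖x j‖ ^ 2 < ∑ _j : Fin k, (1:ℝ)/k := by
      apply Finset.sum_lt_sum_of_nonempty Finset.univ_nonempty
      intro j hj; exact hcon j hj
    rw [hsum, Finset.sum_const, Finset.card_univ, Fintype.card_fin, nsmul_eq_mul] at this
    rw [mul_one_div, div_self (by positivity : (k:ℝ) ≠ 0)] at this
    exact lt_irrefl 1 this
  have hxi0 : x i ≠ 0 := by
    intro h0
    rw [h0] at hi
    simp at hi
    have : (0:ℝ) < 1/k := by positivity
    linarith
  -- the correction vector
  set H := Submodule.span ℂ {w : Fin n → ℂ | ∃ j : Fin k, j ≠ i ∧ w = fun r => A r j}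
  set h : Fin n → ℂ := (-(x i)⁻¹) • ∑ j ∈ Finset.univ.erase i, x j • (fun r => A r j)
  have hhH : h ∈ H := by
    apply Submodule.smul_mem
    apply Submodule.sum_mem
    intro j hj
    apply Submodule.smul_mem
    exact Submodule.subset_span ⟨j, Finset.ne_of_mem_erase hj, rfl⟩
  have hkey : A.mulVec x = (x i) • ((fun r => A r i) - h) := by
    funext r
    simp only [Matrix.mulVec, dotProduct, Pi.smul_apply, Pi.sub_apply, h,
      Finset.sum_apply, smul_eq_mul, neg_smul, Pi.neg_apply, mul_neg]
    rw [← Finset.add_sum_erase _ _ (Finset.mem_univ i)]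
    have : (x i) * ((x i)⁻¹ * ∑ j ∈ Finset.univ.erase i, x j * A r j)
        = ∑ j ∈ Finset.univ.erase i, x j * A r j := by
      rw [← mul_assoc, mul_inv_cancel₀ hxi0, one_mul]
    rw [sub_neg_eq_add, mul_add, this, mul_comm (A r i)]
    exact congrArg _ (Finset.sum_congr rfl (fun j _ => mul_comm _ _))
  rw [hkey, cEnorm_smul]
  have hxnorm : 1 / Real.sqrt k ≤ ‖x i‖ := by
    have h1 : Real.sqrt ((1:ℝ)/k) ≤ Real.sqrt (‖x i‖ ^ 2) := Real.sqrt_le_sqrt hi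
    rwa [Real.sqrt_sq (norm_nonneg _), one_div, Real.sqrt_inv, ← one_div] at h1
  have hbdd : BddBelow (Set.range fun i : Fin k => distE (fun r => A r i)
      (Submodule.span ℂ {w | ∃ j : Fin k, j ≠ i ∧ w = fun r => A r j})) :=
    ⟨0, by rintro r ⟨i, rfl⟩; exact distE_nonneg _ _⟩
  calc (1 / Real.sqrt k) * (⨅ i : Fin k, distE (fun r => A r i)
          (Submodule.span ℂ {w | ∃ j : Fin k, j ≠ i ∧ w = fun r => A r j}))
      ≤ ‖x i‖ * (⨅ i : Fin k, distE (fun r => A r i)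
          (Submodule.span ℂ {w | ∃ j : Fin k, j ≠ i ∧ w = fun r => A r j})) := by
        apply mul_le_mul_of_nonneg_right hxnorm
        exact le_ciInf (fun i => distE_nonneg _ _)
    _ ≤ ‖x i‖ * distE (fun r => A r i) H := by
        apply mul_le_mul_of_nonneg_left _ (norm_nonneg _)
        exact ciInf_le hbdd i
    _ ≤ ‖x i‖ * cEnorm ((fun r => A r i) - h) := by
        apply mul_le_mul_of_nonneg_left _ (norm_nonneg _)
        exact distE_le _ _ h hhH
end

section
/- Let δ, ρ ∈ (0,1) and let x ∈ ℂⁿ be a unit vector with dist(x, Sparse(δ)) > ρ, where Sparse(δ) is the set of vectors supported on at most δn coordinates (i.e., x is (δ,ρ)-incompressible). Then there exists a subset π ⊆ {1,...,n} with |π| ≥ δn/2 such that for all i ∈ π, ρ/√n ≤ |x_i| ≤ √(2/(δn)). -/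
/-- Euclidean norm of a complex vector. -/
noncomputable def enorm {ι : Type*} [Fintype ι] (v : ι → ℂ) : ℝ :=
  Real.sqrt (∑ i, ‖v i‖ ^ 2)

/-- Euclidean distance from a vector to a set of vectors. -/
noncomputable def distSet {ι : Type*} [Fintype ι] (v : ι → ℂ)
    (S : Set (ι → ℂ)) : ℝ :=
  sInf {r | ∃ y ∈ S, r = _root_.enorm (v - y)}

/-- The set of vectors in `ℂⁿ` supported on at most `δ n` coordinates. -/
def sparse (n : ℕ) (δ : ℝ) : Set (Fin n → ℂ) :=
  {y | (Nat.card {i // y i ≠ 0} : ℝ) ≤ δ * n}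

/-- If `x ∈ ℂⁿ` is a `(δ,ρ)`-incompressible unit vector (its distance to the set
of `δn`-sparse vectors exceeds `ρ`), then there is a set `π` of at least `δn/2`
coordinates on which `ρ/√n ≤ |x_i| ≤ √(2/(δn))`. -/
theorem incompressible_spread {n : ℕ} (δ ρ : ℝ)
    (hδ : δ ∈ Set.Ioo (0 : ℝ) 1) (hρ : ρ ∈ Set.Ioo (0 : ℝ) 1)
    (x : Fin n → ℂ) (hx : _root_.enorm x = 1) (hinc : ρ < distSet x (sparse n δ)) :
    ∃ π : Finset (Fin n), δ * n / 2 ≤ (π.card : ℝ) ∧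
      ∀ i ∈ π, ρ / Real.sqrt n ≤ ‖x i‖ ∧ ‖x i‖ ≤ Real.sqrt (2 / (δ * n)) := by
  obtain ⟨hδ0, hδ1⟩ := hδ
  obtain ⟨hρ0, hρ1⟩ := hρ
  have hn : 0 < n := by
    by_contra h
    push_neg at h
    interval_cases n
    simp [_root_.enorm] at hx
  have hnR : (0:ℝ) < n := by exact_mod_cast hn
  have hsum0 : 0 ≤ ∑ i, ‖x i‖^2 := Finset.sum_nonneg fun i _ => sq_nonneg _
  have hsum : ∑ i, ‖x i‖^2 = 1 := by
    have h1 : Real.sqrt (∑ i, ‖x i‖^2) = 1 := hx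
    nlinarith [Real.sq_sqrt hsum0]
  set T := Finset.univ.filter (fun i => ρ / Real.sqrt n ≤ ‖x i‖) with hT
  set B := Finset.univ.filter (fun i => Real.sqrt (2 / (δ * n)) < ‖x i‖) with hB
  -- Claim 1: δn < |T|
  have hTcard : δ * n < (T.card : ℝ) := by
    by_contra hcon
    push_neg at hcon
    set y : Fin n → ℂ := fun i => if i ∈ T then x i else 0 with hy
    have hy_sparse : y ∈ sparse n δ := by
      unfold sparse
      have hcard : Nat.card {i // y i ≠ 0} = (Finset.univ.filter (fun i => y i ≠ 0)).card := by
        rw [Nat.card_eq_fintype_card, Fintype.card_subtype]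
      have hsub : (Finset.univ.filter (fun i => y i ≠ 0)) ⊆ T := by
        intro i hi
        simp only [Finset.mem_filter, Finset.mem_univ, true_and] at hi
        by_contra hiT
        apply hi
        simp [hy, hiT]
      have := Finset.card_le_card hsub
      simp only [Set.mem_setOf_eq, hcard]
      calc ((Finset.univ.filter (fun i => y i ≠ 0)).card : ℝ) ≤ (T.card : ℝ) := by exact_mod_cast this
        _ ≤ δ * n := hcon
    have hdist_le : distSet x (sparse n δ) ≤ _root_.enorm (x - y) := by
      apply csInf_le
      · refine ⟨0, ?_⟩
        rintro r ⟨z, _, rfl⟩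
        exact Real.sqrt_nonneg _
      · exact ⟨y, hy_sparse, rfl⟩
    have hxy : _root_.enorm (x - y) ≤ ρ := by
      have hterm : ∀ i, ‖(x - y) i‖^2 ≤ ρ^2 / n := by
        intro i
        by_cases hi : i ∈ T
        · simp [hy, hi, Pi.sub_apply]
          positivity
        · have : ‖x i‖ < ρ / Real.sqrt n := by
            by_contra h
            push_neg at h
            exact hi (Finset.mem_filter.mpr ⟨Finset.mem_univ i, h⟩)
          have hnx : 0 ≤ ‖x i‖ := norm_nonneg _
          have h2 : ‖(x - y) i‖ = ‖x i‖ := by simp [hy, hi, Pi.sub_apply]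
          rw [h2]
          have hsq : ‖x i‖^2 ≤ (ρ / Real.sqrt n)^2 := by
            apply sq_le_sq' <;> nlinarith [Real.sqrt_nonneg (n:ℝ)]
          calc ‖x i‖^2 ≤ (ρ / Real.sqrt n)^2 := hsq
            _ = ρ^2 / n := by
                rw [div_pow, Real.sq_sqrt hnR.le]
      have hsumle : ∑ i, ‖(x - y) i‖^2 ≤ ρ^2 := by
        calc ∑ i, ‖(x - y) i‖^2 ≤ ∑ _i : Fin n, ρ^2 / n :=
              Finset.sum_le_sum fun i _ => hterm i
          _ = n * (ρ^2 / n) := by simp [Finset.sum_const, Finset.card_univ, mul_comm]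
          _ = ρ^2 := by field_simp
      calc _root_.enorm (x - y) = Real.sqrt (∑ i, ‖(x - y) i‖^2) := rfl
        _ ≤ Real.sqrt (ρ^2) := Real.sqrt_le_sqrt hsumle
        _ = ρ := Real.sqrt_sq hρ0.le
    linarith [hdist_le.trans hxy]
  -- Claim 2: |B| ≤ δn/2
  have hBcard : (B.card : ℝ) ≤ δ * n / 2 := by
    have hpos : (0:ℝ) < 2 / (δ * n) := by positivity
    have hterm : ∀ i ∈ B, 2 / (δ * n) ≤ ‖x i‖^2 := by
      intro i hi
      simp only [hB, Finset.mem_filter, Finset.mem_univ, true_and] at hi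
      have := Real.sq_sqrt hpos.le
      nlinarith [Real.sqrt_nonneg (2 / (δ * n))]
    have h1 : (B.card : ℝ) * (2 / (δ * n)) ≤ ∑ i ∈ B, ‖x i‖^2 := by
      calc (B.card : ℝ) * (2 / (δ * n)) = ∑ _i ∈ B, 2 / (δ * n) := by
            simp [Finset.sum_const, mul_comm]
        _ ≤ ∑ i ∈ B, ‖x i‖^2 := Finset.sum_le_sum hterm
    have h2 : ∑ i ∈ B, ‖x i‖^2 ≤ 1 := by
      rw [← hsum]
      exact Finset.sum_le_sum_of_subset_of_nonneg (Finset.subset_univ _)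
        (fun i _ _ => sq_nonneg _)
    have h3 : (B.card : ℝ) * (2 / (δ * n)) ≤ 1 := h1.trans h2
    have hδn : (0:ℝ) < δ * n := by positivity
    have h4 : (B.card:ℝ) * 2 / (δ * n) ≤ 1 := by rw [mul_div_assoc]; exact h3
    rw [div_le_one hδn] at h4
    linarith
  refine ⟨T \ B, ?_, ?_⟩
  · have hcard : T.card ≤ (T \ B).card + B.card := by
      have hsub : T ⊆ (T \ B) ∪ B := fun i hi => by
        by_cases h : i ∈ B
        · exact Finset.mem_union_right _ h
        · exact Finset.mem_union_left _ (Finset.mem_sdiff.mpr ⟨hi, h⟩)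
      calc T.card ≤ ((T \ B) ∪ B).card := Finset.card_le_card hsub
        _ ≤ (T \ B).card + B.card := Finset.card_union_le _ _
    have : (T.card : ℝ) ≤ ((T \ B).card : ℝ) + B.card := by exact_mod_cast hcard
    linarith
  · intro i hi
    rw [Finset.mem_sdiff] at hi
    obtain ⟨hiT, hiB⟩ := hi
    simp only [hT, hB, Finset.mem_filter, Finset.mem_univ, true_and] at hiT hiB
    push_neg at hiB
    exact ⟨hiT, hiB⟩
end

section
/- Fix z ∈ ℂ, t > 0, and a random variable G with values in ℂ. The equation 1 = E[(1 + t·h⁻¹)/(|G − z|² + (h + t)²)] has at most one solution h ∈ (0,∞): the map h ↦ E[(1 + t h⁻¹)/(|G−z|² + (h+t)²)] is strictly decreasing on (0,∞), tends to +∞ as h → 0⁺ and to 0 as h → ∞, hence there is a unique h > 0 satisfying it. -/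
open MeasureTheory Filter

/-- The map `h ↦ E[(1 + t h⁻¹)/(|G − z|² + (h + t)²)]` is strictly decreasing on
`(0, ∞)`, tends to `+∞` as `h → 0⁺` and to `0` as `h → ∞`; hence there is a
unique `h > 0` with `E[(1 + t h⁻¹)/(|G − z|² + (h + t)²)] = 1`. -/
theorem fixed_point_unique {Ω : Type*} [MeasurableSpace Ω]
    (μ : Measure Ω) [IsProbabilityMeasure μ]
    (G : Ω → ℂ) (hG : Measurable G) (z : ℂ) (t : ℝ) (ht : 0 < t) :
    let F : ℝ → ℝ := fun h => ∫ ω, (1 + t / h) / (‖G ω - z‖ ^ 2 + (h + t) ^ 2) ∂μ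
    StrictAntiOn F (Set.Ioi 0) ∧
      Tendsto F (nhdsWithin 0 (Set.Ioi 0)) atTop ∧
      Tendsto F atTop (nhds 0) ∧
      ∃! h : ℝ, h ∈ Set.Ioi (0 : ℝ) ∧ F h = 1 := by
  intro F
  set q : Ω → ℝ := fun ω => ‖G ω - z‖ ^ 2 with hqdef
  have hq0 : ∀ ω, 0 ≤ q ω := fun ω => sq_nonneg _
  have hqm : Measurable q := ((hG.sub measurable_const).norm).pow measurable_const
  -- integrability of ω ↦ (q ω + d)⁻¹ for d > 0
  have hmeas : ∀ d : ℝ, Measurable fun ω => (q ω + d)⁻¹ :=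
    fun d => (hqm.add measurable_const).inv
  have hint : ∀ d : ℝ, 0 < d → Integrable (fun ω => (q ω + d)⁻¹) μ := by
    intro d hd
    refine (integrable_const d⁻¹).mono' (hmeas d).aestronglyMeasurable ?_
    filter_upwards with ω
    have h1 : 0 < q ω + d := by have := hq0 ω; linarith
    rw [Real.norm_eq_abs, abs_of_pos (inv_pos.2 h1)]
    exact inv_anti₀ hd (by linarith [hq0 ω])
  set I : ℝ → ℝ := fun h => ∫ ω, (q ω + (h + t) ^ 2)⁻¹ ∂μ with hIdef
  have hF : ∀ h, F h = (1 + t / h) * I h := by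
    intro h
    simp only [F, I, div_eq_mul_inv, hqdef]
    rw [integral_const_mul]
  have hIpos : ∀ h : ℝ, 0 < h → 0 < I h := by
    intro h hh
    have hd : 0 < (h + t) ^ 2 := by positivity
    rw [hIdef]
    rw [integral_pos_iff_support_of_nonneg]
    · have : Function.support (fun ω => (q ω + (h + t) ^ 2)⁻¹) = Set.univ := by
        ext ω
        simp only [Function.mem_support, Set.mem_univ, iff_true]
        have : 0 < q ω + (h + t) ^ 2 := by have := hq0 ω; linarith
        positivity
      rw [this]
      simp
    · intro ω
      have : 0 < q ω + (h + t) ^ 2 := by have := hq0 ω; linarith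
      positivity
    · exact hint _ hd
  have hImono : ∀ a b : ℝ, 0 < a → a ≤ b → I b ≤ I a := by
    intro a b ha hab
    refine integral_mono (hint _ (pow_pos (by linarith) 2)) (hint _ (pow_pos (by linarith) 2)) ?_
    intro ω
    have h1 : 0 < q ω + (a + t) ^ 2 := by have h2 : (0:ℝ) < (a+t)^2 := pow_pos (by linarith) 2; linarith [hq0 ω]
    refine inv_anti₀ h1 ?_
    have : (a + t) ^ 2 ≤ (b + t) ^ 2 := by nlinarith
    linarith
  have hanti : StrictAntiOn F (Set.Ioi 0) := by
    intro a ha b hb hab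
    simp only [Set.mem_Ioi] at ha hb
    rw [hF a, hF b]
    have h1 : (1 : ℝ) + t / b < 1 + t / a := by
      have : t / b < t / a := div_lt_div_of_pos_left ht ha hab
      linarith
    calc (1 + t / b) * I b < (1 + t / a) * I b :=
          mul_lt_mul_of_pos_right h1 (hIpos b hb)
      _ ≤ (1 + t / a) * I a := by
          refine mul_le_mul_of_nonneg_left (hImono a b ha hab.le) ?_
          have : 0 < t / a := div_pos ht ha
          linarith
  have hIub : ∀ h : ℝ, 0 < h → I h ≤ ((h + t) ^ 2)⁻¹ := by
    intro h hh
    have hd : (0:ℝ) < (h + t) ^ 2 := by positivity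
    calc I h ≤ ∫ _ω, ((h + t) ^ 2)⁻¹ ∂μ := by
          refine integral_mono (hint _ hd) (integrable_const _) ?_
          intro ω
          exact inv_anti₀ hd (by linarith [hq0 ω])
      _ = ((h + t) ^ 2)⁻¹ := by simp
  -- tendsto at 0⁺
  have htend0 : Tendsto F (nhdsWithin 0 (Set.Ioi 0)) atTop := by
    have hC : 0 < I t := hIpos t ht
    have key : Tendsto (fun h : ℝ => t * I t * h⁻¹) (nhdsWithin 0 (Set.Ioi 0)) atTop := by
      have : Tendsto (fun h : ℝ => h⁻¹) (nhdsWithin 0 (Set.Ioi 0)) atTop :=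
        tendsto_inv_nhdsGT_zero
      exact Tendsto.const_mul_atTop (by positivity) this
    refine tendsto_atTop_mono' _ ?_ key
    have h1 : ∀ᶠ h in nhdsWithin 0 (Set.Ioi 0), h ∈ Set.Ioi (0:ℝ) := self_mem_nhdsWithin
    have h2 : ∀ᶠ h in nhdsWithin 0 (Set.Ioi 0), h < t :=
      eventually_nhdsWithin_of_eventually_nhds (Filter.Tendsto.eventually_lt_const ht tendsto_id)
    filter_upwards [h1, h2] with h hh hht
    simp only [Set.mem_Ioi] at hh
    rw [hF h]
    have e1 : t * I t * h⁻¹ = (t / h) * I t := by ring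
    rw [e1]
    have e2 : I t ≤ I h := by
      have : (t + t)^2 = (2*t)^2 := by ring
      refine le_trans (le_of_eq rfl) ?_
      -- I t uses (t+t)^2; I h uses (h+t)^2 with (h+t)^2 ≤ (t+t)^2
      exact hImono h t hh hht.le
    calc (t / h) * I t ≤ (t / h) * I h :=
          mul_le_mul_of_nonneg_left e2 (by positivity)
      _ ≤ (1 + t / h) * I h := by
          refine mul_le_mul_of_nonneg_right ?_ (hIpos h hh).le
          linarith
  -- tendsto at ∞
  have htendInf : Tendsto F atTop (nhds 0) := by
    have hub : Tendsto (fun h : ℝ => (1 + t / h) * ((h + t) ^ 2)⁻¹) atTop (nhds 0) := by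
      have h1 : Tendsto (fun h : ℝ => 1 + t / h) atTop (nhds 1) := by
        have := tendsto_const_nhds.div_atTop (f := fun _ : ℝ => t) tendsto_id
        simpa using tendsto_const_nhds.add this
      have h2 : Tendsto (fun h : ℝ => ((h + t) ^ 2)⁻¹) atTop (nhds 0) := by
        refine Tendsto.inv_tendsto_atTop ?_
        exact (tendsto_pow_atTop (by norm_num : (2:ℕ) ≠ 0)).comp
          (tendsto_atTop_add_const_right _ t tendsto_id)
      simpa using h1.mul h2
    refine tendsto_of_tendsto_of_tendsto_of_le_of_le' tendsto_const_nhds hub ?_ ?_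
    · filter_upwards [eventually_gt_atTop (0:ℝ)] with h hh
      rw [hF h]
      have : 0 < t / h := div_pos ht hh
      exact mul_nonneg (by linarith) (hIpos h hh).le
    · filter_upwards [eventually_gt_atTop (0:ℝ)] with h hh
      rw [hF h]
      have : 0 < t / h := div_pos ht hh
      exact mul_le_mul_of_nonneg_left (hIub h hh) (by linarith)
  -- continuity on Ioi 0
  have hcont : ContinuousOn F (Set.Ioi 0) := by
    have hI : ∀ h₀ : ℝ, 0 < h₀ → ContinuousAt I h₀ := by
      intro h₀ hh₀
      refine continuousAt_of_dominated (F := fun h ω => (q ω + (h + t) ^ 2)⁻¹)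
        (bound := fun _ => (t ^ 2)⁻¹) ?_ ?_ (integrable_const _) ?_
      · filter_upwards with h
        exact (hmeas _).aestronglyMeasurable
      · filter_upwards [eventually_nhds_iff.2 ⟨Set.Ioi 0, fun x hx => hx, isOpen_Ioi, hh₀⟩]
          with h hh
        filter_upwards with ω
        simp only [Set.mem_Ioi] at hh
        have h1 : 0 < q ω + (h + t) ^ 2 := by have := hq0 ω; positivity
        rw [Real.norm_eq_abs, abs_of_pos (inv_pos.2 h1)]
        refine inv_anti₀ (by positivity) ?_
        nlinarith [hq0 ω]
      · filter_upwards with ω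
        have hne : q ω + (h₀ + t) ^ 2 ≠ 0 := by have := hq0 ω; positivity
        exact (((continuous_const.add
          ((continuous_id.add continuous_const).pow 2)).continuousAt)).inv₀ hne
    intro h₀ hh₀
    simp only [Set.mem_Ioi] at hh₀
    have c1 : ContinuousAt (fun h : ℝ => 1 + t / h) h₀ :=
      continuousAt_const.add (continuousAt_const.div continuousAt_id (ne_of_gt hh₀))
    have : ContinuousAt F h₀ := by
      have := c1.mul (hI h₀ hh₀)
      refine this.congr ?_
      filter_upwards with h using (hF h).symm
    exact this.continuousWithinAt
  refine ⟨hanti, htend0, htendInf, ?_⟩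
  -- existence
  obtain ⟨a, haI, haF⟩ : ∃ a : ℝ, a ∈ Set.Ioi (0:ℝ) ∧ 1 < F a := by
    have := (htend0.eventually_gt_atTop 1).and self_mem_nhdsWithin
    obtain ⟨a, h1, h2⟩ := this.exists
    exact ⟨a, h2, h1⟩
  obtain ⟨b, hba, hbF⟩ : ∃ b : ℝ, a < b ∧ F b < 1 := by
    have := (htendInf.eventually_lt_const one_pos).and (eventually_gt_atTop a)
    obtain ⟨b, h1, h2⟩ := this.exists
    exact ⟨b, h2, h1⟩
  simp only [Set.mem_Ioi] at haI
  have hsub : Set.Icc a b ⊆ Set.Ioi 0 := fun x hx => lt_of_lt_of_le haI hx.1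
  have hIVT := intermediate_value_Icc' hba.le (hcont.mono hsub)
  have h1mem : (1:ℝ) ∈ Set.Icc (F b) (F a) := ⟨hbF.le, haF.le⟩
  obtain ⟨h, hmem, hFh⟩ := hIVT h1mem
  refine ⟨h, ⟨hsub hmem, hFh⟩, ?_⟩
  rintro y ⟨hy, hFy⟩
  exact hanti.injOn hy (hsub hmem) (hFy.trans hFh.symm)
end

section
/- Let S be a complex random variable, t = 1/4, x₁,...,x_m ∈ ℂ with |x_k| ≥ 1, and let X₁,...,X_m be i.i.d. Bernoulli(p) random variables with pm ≤ 1/4 and m ≥ 4. Define p_k = max_{w∈ℂ} P(|Σ_{i=1}^k X_i x_i − w| ≤ t). Then p_m ≤ 1 − mp/4. -/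
open MeasureTheory ProbabilityTheory

/-- Anti-concentration for Bernoulli sums: if `X₁, …, X_m` are i.i.d.
`Bernoulli(p)` with `p m ≤ 1/4`, `m ≥ 4`, and `x₁, …, x_m ∈ ℂ` satisfy
`|x_k| ≥ 1`, then for every `w ∈ ℂ`,
`P(|∑ X_i x_i − w| ≤ 1/4) ≤ 1 − m p / 4`. -/
theorem bernoulli_anticoncentration {Ω : Type*} [MeasurableSpace Ω]
    (μ : Measure Ω) [IsProbabilityMeasure μ]
    {m : ℕ} (hm : 4 ≤ m) (p : ℝ) (hp : 0 ≤ p) (hpm : p * m ≤ 1 / 4)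
    (X : Fin m → Ω → ℝ) (hmeas : ∀ i, Measurable (X i))
    (hval : ∀ i ω, X i ω = 0 ∨ X i ω = 1)
    (hBer : ∀ i, μ {ω | X i ω = 1} = ENNReal.ofReal p)
    (hindep : iIndepFun X μ)
    (x : Fin m → ℂ) (hx : ∀ i, 1 ≤ ‖x i‖) :
    ∀ w : ℂ, μ {ω | ‖(∑ i, (X i ω : ℂ) * x i) - w‖ ≤ 1 / 4}
      ≤ ENNReal.ofReal (1 - m * p / 4) := by
  intro w
  have hm4 : (4:ℝ) ≤ (m:ℝ) := by exact_mod_cast hm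
  have hp16 : p ≤ 1/16 := by nlinarith
  have hq0 : (0:ℝ) ≤ 1 - p := by linarith
  have hmp : (m:ℝ) * p ≤ 1/4 := by linarith [hpm]
  -- product formula
  have hprod : ∀ v : Fin m → ℝ, μ (⋂ j, X j ⁻¹' {v j}) = ∏ j, μ (X j ⁻¹' {v j}) := by
    intro v
    have h := hindep.measure_inter_preimage_eq_mul Finset.univ
      (sets := fun j => {v j}) (fun i _ => measurableSet_singleton (v i))
    simpa using h
  have hone : ∀ j, μ (X j ⁻¹' {(1:ℝ)}) = ENNReal.ofReal p := by
    intro j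
    rw [← hBer j]; rfl
  have hzero : ∀ j, μ (X j ⁻¹' {(0:ℝ)}) = ENNReal.ofReal (1 - p) := by
    intro j
    have hc : X j ⁻¹' {(0:ℝ)} = (X j ⁻¹' {(1:ℝ)})ᶜ := by
      ext ω
      simp only [Set.mem_preimage, Set.mem_singleton_iff, Set.mem_compl_iff]
      constructor
      · intro h0 h1; rw [h0] at h1; norm_num at h1
      · intro h1; rcases hval j ω with h | h
        · exact h
        · exact absurd h h1
    rw [hc, measure_compl ((hmeas j) (measurableSet_singleton 1)) (measure_ne_top _ _),
      measure_univ, hone j, ← ENNReal.ofReal_one, ← ENNReal.ofReal_sub _ hp]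
  -- Bernoulli-type bounds
  have hbern : ∀ n : ℕ, (n:ℝ) ≤ m → 1 - (n:ℝ) * p ≤ (1 - p) ^ n := by
    intro n hn
    have := one_add_mul_le_pow (a := -p) (by linarith) n
    calc 1 - (n:ℝ) * p = 1 + (n:ℝ) * (-p) := by ring
    _ ≤ (1 + -p) ^ n := this
    _ = (1 - p) ^ n := by ring_nf
  by_cases hw : ‖w‖ ≤ 1/4
  · -- case ‖w‖ ≤ 1/4 : event disjoint from "exactly one X_i = 1"
    set E : Fin m → Set Ω := fun i => ⋂ j, X j ⁻¹' {if j = i then (1:ℝ) else 0} with hE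
    have hEmeas : ∀ i, MeasurableSet (E i) :=
      fun i => MeasurableSet.iInter fun j => (hmeas j) (measurableSet_singleton _)
    have hEval : ∀ i ω, ω ∈ E i → ∀ j, X j ω = if j = i then 1 else 0 := by
      intro i ω hω j
      have := Set.mem_iInter.mp hω j
      simpa using this
    have hdisj : Pairwise (Function.onFun Disjoint E) := by
      intro i i' hii'
      refine Set.disjoint_left.mpr fun ω hωi hωi' => ?_
      have h1 := hEval i ω hωi i
      have h2 := hEval i' ω hωi' i
      rw [if_pos rfl] at h1
      rw [if_neg hii'] at h2
      rw [h1] at h2; norm_num at h2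
    have hsub : {ω | ‖(∑ i, (X i ω : ℂ) * x i) - w‖ ≤ 1 / 4} ⊆ (⋃ i, E i)ᶜ := by
      intro ω hω
      simp only [Set.mem_compl_iff, Set.mem_iUnion, not_exists]
      intro i hωi
      have hsum : (∑ j, (X j ω : ℂ) * x j) = x i := by
        have : ∀ j, ((X j ω : ℂ)) * x j = if j = i then x j else 0 := by
          intro j
          rw [hEval i ω hωi j]
          by_cases h : j = i <;> simp [h]
        rw [Finset.sum_congr rfl fun j _ => this j]
        simp
      have hωA : ‖(∑ j, (X j ω : ℂ) * x j) - w‖ ≤ 1/4 := hω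
      rw [hsum] at hωA
      have := norm_sub_norm_le (x i) w
      have := hx i
      linarith [norm_sub_norm_le (x i) w, hx i]
    have hEi : ∀ i, μ (E i) = ENNReal.ofReal (p * (1-p) ^ (m-1)) := by
      intro i
      rw [hE]
      rw [hprod]
      rw [← Finset.mul_prod_erase _ _ (Finset.mem_univ i)]
      have h1 : μ (X i ⁻¹' {if i = i then (1:ℝ) else 0}) = ENNReal.ofReal p := by
        simp [hone i]
      have h2 : ∏ j ∈ Finset.univ.erase i, μ (X j ⁻¹' {if j = i then (1:ℝ) else 0})
          = ENNReal.ofReal ((1-p) ^ (m-1)) := by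
        rw [Finset.prod_congr rfl (fun j hj => by
          rw [if_neg (Finset.ne_of_mem_erase hj), hzero j])]
        rw [Finset.prod_const, Finset.card_erase_of_mem (Finset.mem_univ i)]
        simp [ENNReal.ofReal_pow hq0]
      rw [h1, h2, ← ENNReal.ofReal_mul hp]
    have hU : μ (⋃ i, E i) = ENNReal.ofReal ((m:ℝ) * (p * (1-p) ^ (m-1))) := by
      rw [measure_iUnion hdisj hEmeas, tsum_fintype]
      simp only [hEi, Finset.sum_const, Finset.card_univ, Fintype.card_fin, nsmul_eq_mul]
      rw [← ENNReal.ofReal_natCast m, ← ENNReal.ofReal_mul (Nat.cast_nonneg m)]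
    calc μ {ω | ‖(∑ i, (X i ω : ℂ) * x i) - w‖ ≤ 1 / 4}
        ≤ μ ((⋃ i, E i)ᶜ) := measure_mono hsub
      _ = 1 - μ (⋃ i, E i) := by
          rw [measure_compl (MeasurableSet.iUnion hEmeas) (measure_ne_top _ _), measure_univ]
      _ = ENNReal.ofReal (1 - (m:ℝ) * (p * (1-p) ^ (m-1))) := by
          rw [hU, ← ENNReal.ofReal_one, ← ENNReal.ofReal_sub _ (by positivity)]
      _ ≤ ENNReal.ofReal (1 - m * p / 4) := by
          apply ENNReal.ofReal_le_ofReal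
          have hb : 1 - ((m:ℝ)-1) * p ≤ (1-p) ^ (m-1) := by
            have := hbern (m-1) (by push_cast [Nat.cast_sub (by omega : 1 ≤ m)]; linarith)
            rwa [Nat.cast_sub (by omega : 1 ≤ m), Nat.cast_one] at this
          have h34 : (3/4:ℝ) ≤ (1-p)^(m-1) := by nlinarith
          nlinarith [mul_le_mul_of_nonneg_left h34 (mul_nonneg (Nat.cast_nonneg m) hp)]
  · -- case ‖w‖ > 1/4 : event disjoint from "all X_i = 0"
    set E : Set Ω := ⋂ j, X j ⁻¹' {(0:ℝ)} with hE
    have hEmeas : MeasurableSet E :=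
      MeasurableSet.iInter fun j => (hmeas j) (measurableSet_singleton _)
    have hsub : {ω | ‖(∑ i, (X i ω : ℂ) * x i) - w‖ ≤ 1 / 4} ⊆ Eᶜ := by
      intro ω hω hωE
      have hz : ∀ j, X j ω = 0 := fun j => Set.mem_iInter.mp hωE j
      have hsum : (∑ j, (X j ω : ℂ) * x j) = 0 := by
        apply Finset.sum_eq_zero; intro j _; rw [hz j]; simp
      have hωA : ‖(∑ j, (X j ω : ℂ) * x j) - w‖ ≤ 1/4 := hω
      rw [hsum, zero_sub, norm_neg] at hωA
      exact hw hωA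
    have hEμ : μ E = ENNReal.ofReal ((1-p)^m) := by
      rw [hE, hprod fun _ => 0]
      simp only [hzero]
      rw [Finset.prod_const, Finset.card_univ, Fintype.card_fin, ENNReal.ofReal_pow hq0]
    calc μ {ω | ‖(∑ i, (X i ω : ℂ) * x i) - w‖ ≤ 1 / 4}
        ≤ μ Eᶜ := measure_mono hsub
      _ = 1 - μ E := by rw [measure_compl hEmeas (measure_ne_top _ _), measure_univ]
      _ = ENNReal.ofReal (1 - (1-p)^m) := by
          rw [hEμ, ← ENNReal.ofReal_one, ← ENNReal.ofReal_sub _ (by positivity)]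
      _ ≤ ENNReal.ofReal (1 - m * p / 4) := by
          apply ENNReal.ofReal_le_ofReal
          have hb := hbern m le_rfl
          nlinarith
end
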